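/- For every n ≥ 1, the number of permutations of length n avoiding the four patterns 1324, 1342, 1432 and 4132 equals the central binomial coefficient C(2(n-1), n-1). -/

import Mathlib

def Contains {n k : ℕ} (τ : Equiv.Perm (Fin n)) (p : Fin k → ℕ) : Prop :=
  ∃ f : Fin k → Fin n, StrictMono f ∧ ∀ a b, p a < p b ↔ τ (f a) < τ (f b)

def AvoidsPat {n k : ℕ} (τ : Equiv.Perm (Fin n)) (p : Fin k → ℕ) : Prop := ¬ Contains τ p

open List



/-- `l` avoids the pattern 132 (as a word with distinct entries). -/
def Av132 (l : List ℕ) : Prop := ∀ a b c : ℕ, [a, b, c] <+ l → ¬ (a < c ∧ c < b)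

lemma av132_sublist {l l' : List ℕ} (h : l' <+ l) (hl : Av132 l) : Av132 l' :=
  fun a b c hs => hl a b c (hs.trans h)

/-- Encoding of a binary tree as a 132-avoiding permutation word. -/
def tL : BinaryTree Unit → List ℕ
  | BinaryTree.nil => []
  | BinaryTree.node _ l r =>
      ((tL l).map (· + r.numNodes)) ++ (l.numNodes + r.numNodes) :: tL r

lemma tL_length : ∀ t : BinaryTree Unit, (tL t).length = t.numNodes
  | BinaryTree.nil => rfl
  | BinaryTree.node _ l r => by
      simp [tL, tL_length l, tL_length r, BinaryTree.numNodes]; omega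

lemma tL_mem : ∀ (t : BinaryTree Unit) (x : ℕ), x ∈ tL t ↔ x < t.numNodes
  | BinaryTree.nil, x => by simp [tL]
  | BinaryTree.node _ l r, x => by
      simp only [tL, mem_append, mem_map, mem_cons, BinaryTree.numNodes]
      constructor
      · rintro ((⟨y, hy, rfl⟩) | rfl | h)
        · have := (tL_mem l y).1 hy; omega
        · omega
        · have := (tL_mem r x).1 h; omega
      · intro hx
        rcases lt_trichotomy x r.numNodes with h | h | h
        · exact Or.inr (Or.inr ((tL_mem r x).2 h))
        · rcases Nat.eq_or_lt_of_le (Nat.le_of_lt_succ hx) with h' | h'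
          · exact Or.inr (Or.inl h')
          · exact Or.inl ⟨x - r.numNodes, (tL_mem l _).2 (by omega), by omega⟩
        · rcases Nat.eq_or_lt_of_le (Nat.le_of_lt_succ hx) with h' | h'
          · exact Or.inr (Or.inl h')
          · exact Or.inl ⟨x - r.numNodes, (tL_mem l _).2 (by omega), by omega⟩

lemma tL_nodup : ∀ t : BinaryTree Unit, (tL t).Nodup
  | BinaryTree.nil => by simp [tL]
  | BinaryTree.node _ l r => by
      simp only [tL, nodup_append, nodup_cons]
      refine ⟨(tL_nodup l).map (fun x y h => by omega), ⟨?_, tL_nodup r⟩, ?_⟩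
      · intro h
        have := (tL_mem r _).1 h; omega
      · intro x hx
        simp only [mem_map] at hx
        obtain ⟨y, hy, rfl⟩ := hx
        have hy' := (tL_mem l y).1 hy
        simp only [mem_cons]
        rintro _ (h | h)
        · omega
        · have := (tL_mem r _).1 h; omega

lemma tL_perm (t : BinaryTree Unit) : tL t ~ List.range t.numNodes := by
  rw [perm_ext_iff_of_nodup (tL_nodup t) nodup_range]
  intro a
  rw [tL_mem, mem_range]

lemma sublist_three {a b c : ℕ} {l : List ℕ} (h : [a, b, c] <+ l) :
    ∀ x ∈ [a, b, c], x ∈ l := fun x hx => h.subset hx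

lemma tL_av : ∀ t : BinaryTree Unit, Av132 (tL t)
  | BinaryTree.nil => by intro a b c h; simp [tL] at h
  | BinaryTree.node _ l r => by
      intro a b c h habc
      obtain ⟨ha, hc, _⟩ : a < c ∧ c < b ∧ True := ⟨habc.1, habc.2, trivial⟩
      rw [tL] at h
      rw [sublist_append_iff] at h
      obtain ⟨s, t', heq, hs, ht⟩ := h
      rw [sublist_cons_iff] at ht
      -- helper facts
      have hmemS : ∀ x ∈ s, r.numNodes ≤ x ∧ x < l.numNodes + r.numNodes := by
        intro x hx
        have := hs.subset hx
        simp only [mem_map] at this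
        obtain ⟨y, hy, rfl⟩ := this
        have := (tL_mem l y).1 hy
        omega
      rcases ht with ht | ⟨t'', ht'', hsub⟩
      · -- the part after the middle is inside tL r
        have hmemT : ∀ x ∈ t', x < r.numNodes := fun x hx => (tL_mem r x).1 (ht.subset hx)
        match s, heq with
        | [], heq =>
          have : t' = [a, b, c] := by simpa using heq.symm
          subst this
          exact tL_av r a b c ht habc
        | [a'], heq =>
          simp only [List.cons_append, List.nil_append, List.cons.injEq] at heq
          obtain ⟨rfl, heq2⟩ := heq
          have h1 := (hmemS a (by simp)).1
          have h2 := hmemT c (by rw [← heq2]; simp)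
          omega
        | [a', b'], heq =>
          simp only [List.cons_append, List.nil_append, List.cons.injEq] at heq
          obtain ⟨rfl, rfl, heq2⟩ := heq
          have h1 := (hmemS a (by simp)).1
          have h2 := hmemT c (by rw [← heq2]; simp)
          omega
        | [a', b', c'], heq =>
          simp only [List.cons_append, List.nil_append, List.cons.injEq] at heq
          obtain ⟨rfl, rfl, rfl, _⟩ := heq
          rw [sublist_map_iff] at hs
          obtain ⟨l', hl', heq'⟩ := hs
          match l', heq' with
          | [x, y, z], heq' =>
            simp only [List.map_cons, List.map_nil, List.cons.injEq] at heq'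
            obtain ⟨rfl, rfl, rfl, _⟩ := heq'
            exact tL_av l x y z hl' (by omega)
        | a' :: b' :: c' :: d' :: rest, heq =>
          have := congrArg length heq
          simp at this
      · -- middle element used
        subst ht''
        have hmemT : ∀ x ∈ t'', x < r.numNodes := fun x hx => (tL_mem r x).1 (hsub.subset hx)
        match s, heq with
        | [], heq =>
          simp only [List.nil_append, List.cons.injEq] at heq
          obtain ⟨rfl, heq2⟩ := heq
          have h2 := hmemT b (by rw [← heq2]; simp)
          omega
        | [a'], heq =>
          simp only [List.cons_append, List.nil_append, List.cons.injEq] at heq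
          obtain ⟨rfl, rfl, heq2⟩ := heq
          have h1 := (hmemS a (by simp)).1
          have h2 := hmemT c (by rw [← heq2]; simp)
          omega
        | [a', b'], heq =>
          simp only [List.cons_append, List.nil_append, List.cons.injEq] at heq
          obtain ⟨rfl, rfl, rfl, _⟩ := heq
          have h1 := (hmemS b (by simp)).2
          omega
        | a' :: b' :: c' :: rest, heq =>
          have := congrArg length heq
          simp at this

lemma tL_inj : ∀ t₁ t₂ : BinaryTree Unit, tL t₁ = tL t₂ → t₁ = t₂
  | BinaryTree.nil, BinaryTree.nil, _ => rfl
  | BinaryTree.nil, BinaryTree.node _ l r, h => by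
      have := congrArg length h
      rw [tL_length, tL_length] at this
      simp [BinaryTree.numNodes] at this
  | BinaryTree.node _ l r, BinaryTree.nil, h => by
      have := congrArg length h
      rw [tL_length, tL_length] at this
      simp [BinaryTree.numNodes] at this
  | BinaryTree.node u₁ l₁ r₁, BinaryTree.node u₂ l₂ r₂, h => by
      obtain rfl : u₁ = () := rfl
      obtain rfl : u₂ = () := rfl
      -- lengths of the left map-parts agree
      have hlen : l₁.numNodes + r₁.numNodes = l₂.numNodes + r₂.numNodes := by
        have := congrArg length h
        rw [tL_length, tL_length] at this
        simp [BinaryTree.numNodes] at this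
        omega
      have hd1 : tL (BinaryTree.node () l₁ r₁)
          = ((tL l₁).map (· + r₁.numNodes)) ++ (l₁.numNodes + r₁.numNodes) :: tL r₁ := rfl
      have hd2 : tL (BinaryTree.node () l₂ r₂)
          = ((tL l₂).map (· + r₂.numNodes)) ++ (l₂.numNodes + r₂.numNodes) :: tL r₂ := rfl
      have hll : l₁.numNodes = l₂.numNodes := by
        by_contra hne
        -- wlog via symmetric argument
        rcases Nat.lt_or_ge l₁.numNodes l₂.numNodes with hlt | hge
        · -- element at index l₁.numNodes : in list1 it is the max, in list2 it is in map part
          have h1 : (tL (BinaryTree.node () l₁ r₁))[l₁.numNodes]'(by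
              rw [tL_length]; simp [BinaryTree.numNodes]) = l₁.numNodes + r₁.numNodes := by
            rw [List.getElem_of_eq hd1]
            rw [getElem_append_right (by simp [tL_length])]
            simp [tL_length]
          have h2 : (tL (BinaryTree.node () l₂ r₂))[l₁.numNodes]'(by
              rw [tL_length]; simp [BinaryTree.numNodes]; omega) < l₂.numNodes + r₂.numNodes := by
            rw [List.getElem_of_eq hd2]
            rw [getElem_append_left (by simp [tL_length]; omega)]
            have hmem : ((tL l₂).map (· + r₂.numNodes))[l₁.numNodes]'(by simp [tL_length]; omega)
                ∈ (tL l₂).map (· + r₂.numNodes) := getElem_mem _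
            simp only [mem_map] at hmem
            obtain ⟨y, hy, hEq⟩ := hmem
            rw [← hEq]
            have := (tL_mem l₂ y).1 hy
            omega
          rw [List.getElem_of_eq h] at h1
          omega
        · have hlt : l₂.numNodes < l₁.numNodes := by omega
          have h1 : (tL (BinaryTree.node () l₂ r₂))[l₂.numNodes]'(by
              rw [tL_length]; simp [BinaryTree.numNodes]) = l₂.numNodes + r₂.numNodes := by
            rw [List.getElem_of_eq hd2]
            rw [getElem_append_right (by simp [tL_length])]
            simp [tL_length]
          have h2 : (tL (BinaryTree.node () l₁ r₁))[l₂.numNodes]'(by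
              rw [tL_length]; simp [BinaryTree.numNodes]; omega) < l₁.numNodes + r₁.numNodes := by
            rw [List.getElem_of_eq hd1]
            rw [getElem_append_left (by simp [tL_length]; omega)]
            have hmem : ((tL l₁).map (· + r₁.numNodes))[l₂.numNodes]'(by simp [tL_length]; omega)
                ∈ (tL l₁).map (· + r₁.numNodes) := getElem_mem _
            simp only [mem_map] at hmem
            obtain ⟨y, hy, hEq⟩ := hmem
            rw [← hEq]
            have := (tL_mem l₁ y).1 hy
            omega
          rw [List.getElem_of_eq h.symm] at h1
          omega
      have hrr : r₁.numNodes = r₂.numNodes := by omega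
      rw [hd1, hd2] at h
      have := List.append_inj h (by simp [tL_length, hll])
      obtain ⟨h1, h2⟩ := this
      rw [hrr] at h1
      have hl : tL l₁ = tL l₂ := by
        have hinj : Function.Injective (fun x => x + r₂.numNodes : ℕ → ℕ) := fun x y h => by
          simpa using h
        exact List.map_injective_iff.2 hinj h1
      have hr : tL r₁ = tL r₂ := by
        simp only [List.cons.injEq] at h2
        exact h2.2
      rw [tL_inj _ _ hl, tL_inj _ _ hr]

lemma tL_surj : ∀ (m : ℕ) (l : List ℕ), l ~ List.range m → Av132 l →
    ∃ t : BinaryTree Unit, tL t = l := by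
  intro m
  induction m using Nat.strong_induction_on with
  | _ m IH =>
    match m with
    | 0 =>
      intro l hp _
      refine ⟨BinaryTree.nil, ?_⟩
      simp only [List.range_zero] at hp
      simpa [tL] using hp.eq_nil.symm
    | m + 1 =>
      intro l hp hav
      have hnodup : l.Nodup := hp.nodup_iff.2 nodup_range
      have hmem : ∀ x, x ∈ l ↔ x < m + 1 := fun x => by
        rw [hp.mem_iff, mem_range]
      obtain ⟨s, t, rfl⟩ := List.append_of_mem ((hmem m).2 (Nat.lt_succ_self m))
      rw [List.nodup_append] at hnodup
      obtain ⟨hns, hnmt, hdisj⟩ := hnodup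
      have hmns : m ∉ s := fun hx => hdisj m hx m mem_cons_self rfl
      have hmnt : m ∉ t := fun hx => (List.nodup_cons.1 hnmt).1 hx
      have hnt : t.Nodup := (List.nodup_cons.1 hnmt).2
      set a := s.length with ha
      set b := t.length with hb
      have hab : a + b = m := by
        have := hp.length_eq
        simp [List.length_append] at this
        omega
      -- every element of t is below every element of s
      have hst : ∀ x ∈ s, ∀ y ∈ t, y < x := by
        intro x hx y hy
        have hxy : x ≠ y := fun h => hdisj x hx y (mem_cons_of_mem _ hy) h
        by_contra hc
        push_neg at hc
        have hxy' : x < y := lt_of_le_of_ne hc hxy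
        have hsub : [x, m, y] <+ s ++ m :: t := by
          have h1 : [x] <+ s := List.singleton_sublist.2 hx
          have h2 : m :: [y] <+ m :: t := List.Sublist.cons₂ m (List.singleton_sublist.2 hy)
          exact h1.append h2
        have hym : y < m := by
          have := (hmem y).1 (by simp [hy])
          have : y ≠ m := fun h => hmnt (h ▸ hy)
          have := (hmem y).1 (by simp [hy])
          omega
        exact hav x m y hsub ⟨hxy', hym⟩
      have hs_ub : ∀ x ∈ s, x < m := by
        intro x hx
        have h1 := (hmem x).1 (by simp [hx])
        have : x ≠ m := fun h => hmns (h ▸ hx)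
        omega
      have ht_ub : ∀ y ∈ t, y < b := by
        intro y hy
        have hym : y < m := by
          have h1 := (hmem y).1 (by simp [hy])
          have : y ≠ m := fun h => hmnt (h ▸ hy)
          omega
        have hsubset : (m :: s).toFinset ⊆ Finset.Ioc y m := by
          intro x hx
          simp only [List.mem_toFinset, mem_cons] at hx
          rcases hx with rfl | hx
          · simp [hym]
          · simp only [Finset.mem_Ioc]
            exact ⟨hst x hx y hy, le_of_lt (hs_ub x hx)⟩
        have hcard : (m :: s).toFinset.card = a + 1 := by
          rw [List.toFinset_card_of_nodup (by simp [hmns, hns])]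
          simpa using ha.symm
        have := Finset.card_le_card hsubset
        rw [hcard, Nat.card_Ioc] at this
        omega
      have hs_lb : ∀ x ∈ s, b ≤ x := by
        intro x hx
        have hsubset : t.toFinset ⊆ Finset.Iio x := by
          intro y hy
          simp only [List.mem_toFinset] at hy
          simp only [Finset.mem_Iio]
          exact hst x hx y hy
        have := Finset.card_le_card hsubset
        rw [List.toFinset_card_of_nodup hnt, Nat.card_Iio] at this
        omega
      -- the right part
      have htperm : t ~ List.range b := by
        rw [List.perm_ext_iff_of_nodup hnt nodup_range]
        intro y
        rw [mem_range]
        constructor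
        · exact ht_ub y
        · intro hyb
          have : y ∈ s ++ m :: t := (hmem y).2 (by omega)
          simp only [mem_append, mem_cons] at this
          rcases this with h | h | h
          · exact absurd (hs_lb y h) (by omega)
          · omega
          · exact h
      have htav : Av132 t := av132_sublist
        (((List.sublist_cons_self m t).trans (List.sublist_append_right s _))) hav
      -- the left part, shifted down
      set s' := s.map (· - b) with hs'
      have hs'nodup : s'.Nodup := by
        refine hns.map_on ?_
        intro x hx y hy hxy
        have := hs_lb x hx
        have := hs_lb y hy
        simpa using by omega
      have hs'perm : s' ~ List.range a := by
        rw [List.perm_ext_iff_of_nodup hs'nodup nodup_range]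
        intro u
        rw [mem_range]
        constructor
        · intro hu
          simp only [hs', mem_map] at hu
          obtain ⟨x, hx, rfl⟩ := hu
          have := hs_ub x hx
          have := hs_lb x hx
          omega
        · intro hu
          simp only [hs', mem_map]
          refine ⟨u + b, ?_, by omega⟩
          have : u + b ∈ s ++ m :: t := (hmem _).2 (by omega)
          simp only [mem_append, mem_cons] at this
          rcases this with h | h | h
          · exact h
          · omega
          · exact absurd (ht_ub _ h) (by omega)
      have hs'av : Av132 s' := by
        intro u v w hsub huvw
        rw [hs', List.sublist_map_iff] at hsub
        obtain ⟨l'', hl'', heq⟩ := hsub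
        match l'', heq with
        | [x, y, z], heq =>
          simp only [List.map_cons, List.map_nil, List.cons.injEq] at heq
          obtain ⟨rfl, rfl, rfl, _⟩ := heq
          have hx := hs_lb x (hl''.subset (by simp))
          have hy := hs_lb y (hl''.subset (by simp))
          have hz := hs_lb z (hl''.subset (by simp))
          exact hav x y z (hl''.trans (List.sublist_append_left s _)) (by omega)
      obtain ⟨t₁, ht₁⟩ := IH a (by omega) s' hs'perm hs'av
      obtain ⟨t₂, ht₂⟩ := IH b (by omega) t htperm htav
      have hn₁ : t₁.numNodes = a := by rw [← tL_length, ht₁, hs']; simpa using ha.symm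
      have hn₂ : t₂.numNodes = b := by rw [← tL_length, ht₂]
      refine ⟨BinaryTree.node () t₁ t₂, ?_⟩
      have : tL (BinaryTree.node () t₁ t₂)
          = ((tL t₁).map (· + t₂.numNodes)) ++ (t₁.numNodes + t₂.numNodes) :: tL t₂ := rfl
      rw [this, ht₁, ht₂, hn₁, hn₂, hab, hs', List.map_map]
      congr 1
      rw [show ((· + b) ∘ (· - b)) = fun x => x - b + b from rfl]
      have : ∀ x ∈ s, x - b + b = x := fun x hx => by have := hs_lb x hx; omega
      calc s.map (fun x => x - b + b) = s.map id := List.map_congr_left this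
        _ = s := List.map_id s




/-- word of a permutation -/
def pWord {n : ℕ} (τ : Equiv.Perm (Fin n)) : List ℕ := List.ofFn (fun i => (τ i : ℕ))

lemma pWord_nodup {n : ℕ} (τ : Equiv.Perm (Fin n)) : (pWord τ).Nodup := by
  rw [pWord, List.nodup_ofFn]
  intro x y h
  exact τ.injective (Fin.val_injective h)

lemma pWord_perm {n : ℕ} (τ : Equiv.Perm (Fin n)) : pWord τ ~ List.range n := by
  rw [List.perm_ext_iff_of_nodup (pWord_nodup τ) nodup_range]
  intro x
  simp only [pWord, List.mem_ofFn, Set.mem_range, mem_range]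
  constructor
  · rintro ⟨i, rfl⟩; exact (τ i).isLt
  · intro hx; exact ⟨τ.symm ⟨x, hx⟩, by simp⟩

lemma sublist_erase_of_not_mem {α : Type*} [DecidableEq α] {s l : List α} {x : α}
    (h : s <+ l) (hx : x ∉ s) : s <+ l.erase x := by
  induction l generalizing s with
  | nil => simpa using h
  | cons a l ih =>
    by_cases hax : a = x
    · subst hax
      rw [List.erase_cons_head]
      rcases List.sublist_cons_iff.1 h with h' | ⟨r, rfl, hr⟩
      · exact h'
      · exact absurd (List.mem_cons_self) hx
    · rw [List.erase_cons_tail (by simpa using hax)]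
      rcases List.sublist_cons_iff.1 h with h' | ⟨r, rfl, hr⟩
      · exact (ih h' hx).cons a
      · exact List.Sublist.cons₂ a (ih hr (by simp only [List.mem_cons, not_or] at hx; exact hx.2))

/-- triple sublists of a word correspond to index triples -/
lemma triple_sublist_iff {n : ℕ} {g : Fin n → ℕ} {a b c : ℕ} :
    [a, b, c] <+ List.ofFn g ↔
      ∃ i j k : Fin n, i < j ∧ j < k ∧ g i = a ∧ g j = b ∧ g k = c := by
  rw [List.sublist_iff_exists_fin_orderEmbedding_get_eq]
  have hlen : (List.ofFn g).length = n := List.length_ofFn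
  constructor
  · rintro ⟨f, hf⟩
    refine ⟨Fin.cast hlen (f ⟨0, by simp⟩), Fin.cast hlen (f ⟨1, by simp⟩),
      Fin.cast hlen (f ⟨2, by simp⟩), ?_, ?_, ?_, ?_, ?_⟩
    · have := f.strictMono (show (⟨0, by simp⟩ : Fin ([a,b,c].length)) < ⟨1, by simp⟩ from by
        rw [Fin.lt_iff_val_lt_val]; norm_num)
      rwa [Fin.lt_iff_val_lt_val] at this ⊢
    · have := f.strictMono (show (⟨1, by simp⟩ : Fin ([a,b,c].length)) < ⟨2, by simp⟩ from by
        rw [Fin.lt_iff_val_lt_val]; norm_num)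
      rwa [Fin.lt_iff_val_lt_val] at this ⊢
    · have := hf ⟨0, by simp⟩
      rw [List.get_ofFn] at this
      exact this.symm
    · have := hf ⟨1, by simp⟩
      rw [List.get_ofFn] at this
      exact this.symm
    · have := hf ⟨2, by simp⟩
      rw [List.get_ofFn] at this
      exact this.symm
  · rintro ⟨i, j, k, hij, hjk, ha, hb, hc⟩
    have hmono : StrictMono (fun x : Fin ([a,b,c].length) =>
        Fin.cast hlen.symm ((![i, j, k] : Fin 3 → Fin n) (Fin.cast (by norm_num) x))) := by
      intro x y hxy
      rw [Fin.lt_iff_val_lt_val]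
      simp only [Fin.coe_cast]
      set x' : Fin 3 := Fin.cast (by norm_num) x with hx'
      set y' : Fin 3 := Fin.cast (by norm_num) y with hy'
      have hxy' : x' < y' := by
        rw [Fin.lt_iff_val_lt_val] at hxy ⊢
        simpa [hx', hy'] using hxy
      have hijk : ∀ u v : Fin 3, u < v → (![i, j, k] u : Fin n) < ![i, j, k] v := by
        intro u v huv
        fin_cases u <;> fin_cases v <;>
          first
          | exact absurd huv (by decide)
          | exact hij
          | exact hjk
          | exact hij.trans hjk
      exact hijk x' y' hxy'
    refine ⟨OrderEmbedding.ofStrictMono _ hmono, ?_⟩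
    intro ix
    rw [List.get_ofFn]
    fin_cases ix <;> simp [ha.symm, hb.symm, hc.symm]

lemma mono4 {α : Type*} [Preorder α] (q0 q1 q2 q3 : α)
    (h01 : q0 < q1) (h12 : q1 < q2) (h23 : q2 < q3) : StrictMono (![q0,q1,q2,q3]) := by
  intro u v huv
  fin_cases u <;> fin_cases v <;>
    simp only [Matrix.cons_val_zero, Matrix.cons_val_one, Matrix.head_cons,
      Matrix.cons_val_two, Matrix.tail_cons, Matrix.cons_val_three] <;>
    first
      | exact absurd huv (by decide)
      | exact h01 | exact h12 | exact h23
      | exact h01.trans h12 | exact h12.trans h23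
      | exact (h01.trans h12).trans h23

/-- If there is a 132 pattern dominated by some other value, the word minus the max
is not 132-avoiding. -/
lemma mk132 {m : ℕ} (τ : Equiv.Perm (Fin (m+1))) {i j k w : Fin (m+1)}
    (hij : i < j) (hjk : j < k) (hv1 : (τ i : ℕ) < τ k) (hv2 : (τ k : ℕ) < τ j)
    (hw : (τ j : ℕ) < τ w) : ¬ Av132 ((pWord τ).erase m) := by
  intro hav
  have hb : (τ j : ℕ) < m := by
    have := (τ w).isLt
    omega
  have hsub : [(τ i : ℕ), (τ j : ℕ), (τ k : ℕ)] <+ pWord τ :=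
    triple_sublist_iff.2 ⟨i, j, k, hij, hjk, rfl, rfl, rfl⟩
  have hsub' : [(τ i : ℕ), (τ j : ℕ), (τ k : ℕ)] <+ (pWord τ).erase m :=
    sublist_erase_of_not_mem hsub (by
      simp only [List.mem_cons, not_or, List.not_mem_nil]
      refine ⟨by omega, by omega, by omega, not_false⟩)
  exact hav _ _ _ hsub' ⟨hv1, hv2⟩

lemma containsFour_iff {m : ℕ} (τ : Equiv.Perm (Fin (m+1))) :
    (Contains τ ![1,3,2,4] ∨ Contains τ ![1,3,4,2] ∨ Contains τ ![1,4,3,2] ∨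
      Contains τ ![4,1,3,2]) ↔ ¬ Av132 ((pWord τ).erase m) := by
  constructor
  · rintro (⟨f, hm, hiff⟩ | ⟨f, hm, hiff⟩ | ⟨f, hm, hiff⟩ | ⟨f, hm, hiff⟩)
    · exact mk132 τ (hm (show (0:Fin 4) < 1 by decide)) (hm (show (1:Fin 4) < 2 by decide))
        (Fin.lt_iff_val_lt_val.1 ((hiff 0 2).1 (by simp)))
        (Fin.lt_iff_val_lt_val.1 ((hiff 2 1).1 (by simp)))
        (Fin.lt_iff_val_lt_val.1 ((hiff 1 3).1 (by simp)))
    · exact mk132 τ (hm (show (0:Fin 4) < 1 by decide))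
        ((hm (show (1:Fin 4) < 2 by decide)).trans (hm (show (2:Fin 4) < 3 by decide)))
        (Fin.lt_iff_val_lt_val.1 ((hiff 0 3).1 (by simp)))
        (Fin.lt_iff_val_lt_val.1 ((hiff 3 1).1 (by simp)))
        (Fin.lt_iff_val_lt_val.1 ((hiff 1 2).1 (by simp)))
    · exact mk132 τ ((hm (show (0:Fin 4) < 1 by decide)).trans (hm (show (1:Fin 4) < 2 by decide)))
        (hm (show (2:Fin 4) < 3 by decide))
        (Fin.lt_iff_val_lt_val.1 ((hiff 0 3).1 (by simp)))
        (Fin.lt_iff_val_lt_val.1 ((hiff 3 2).1 (by simp)))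
        (Fin.lt_iff_val_lt_val.1 ((hiff 2 1).1 (by simp)))
    · exact mk132 τ (hm (show (1:Fin 4) < 2 by decide)) (hm (show (2:Fin 4) < 3 by decide))
        (Fin.lt_iff_val_lt_val.1 ((hiff 1 3).1 (by simp)))
        (Fin.lt_iff_val_lt_val.1 ((hiff 3 2).1 (by simp)))
        (Fin.lt_iff_val_lt_val.1 ((hiff 2 0).1 (by simp)))
  · intro hnav
    rw [Av132] at hnav
    push_neg at hnav
    obtain ⟨a, b, c, hsub, h1, h2⟩ := hnav
    have hsubW : [a, b, c] <+ pWord τ := hsub.trans (List.erase_sublist)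
    rw [pWord] at hsubW
    obtain ⟨i, j, k, hij, hjk, hva, hvb, hvc⟩ := triple_sublist_iff.1 hsubW
    have hbm : b ≠ m := by
      have hmem : b ∈ (pWord τ).erase m := hsub.subset (by simp)
      exact (((pWord_nodup τ).mem_erase_iff).1 hmem).1
    have hb : b < m := by
      have := (τ j).isLt
      omega
    set w := τ.symm ⟨m, Nat.lt_succ_self m⟩ with hw
    have hvw : (τ w : ℕ) = m := by rw [hw]; simp
    have hwi : w ≠ i := fun h => by rw [h, hva] at hvw; omega
    have hwj : w ≠ j := fun h => by rw [h, hvb] at hvw; omega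
    have hwk : w ≠ k := fun h => by rw [h, hvc] at hvw; omega
    rcases lt_or_gt_of_ne hwi with hpos | hpos
    · -- w < i : pattern 4132
      refine Or.inr (Or.inr (Or.inr ⟨![w, i, j, k], mono4 _ _ _ _ hpos hij hjk, ?_⟩))
      intro u v
      rw [Fin.lt_iff_val_lt_val]
      fin_cases u <;> fin_cases v <;> simp <;> omega
    rcases lt_or_gt_of_ne hwj with hpos2 | hpos2
    · -- i < w < j : pattern 1432
      refine Or.inr (Or.inr (Or.inl ⟨![i, w, j, k], mono4 _ _ _ _ hpos hpos2 hjk, ?_⟩))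
      intro u v
      rw [Fin.lt_iff_val_lt_val]
      fin_cases u <;> fin_cases v <;> simp <;> omega
    rcases lt_or_gt_of_ne hwk with hpos3 | hpos3
    · -- j < w < k : pattern 1342
      refine Or.inr (Or.inl ⟨![i, j, w, k], mono4 _ _ _ _ hij hpos2 hpos3, ?_⟩)
      intro u v
      rw [Fin.lt_iff_val_lt_val]
      fin_cases u <;> fin_cases v <;> simp <;> omega
    · -- k < w : pattern 1324
      refine Or.inl ⟨![i, j, k, w], mono4 _ _ _ _ hij hjk hpos3, ?_⟩
      intro u v
      rw [Fin.lt_iff_val_lt_val]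
      fin_cases u <;> fin_cases v <;> simp <;> omega

noncomputable def permWordEquiv (n : ℕ) :
    Equiv.Perm (Fin n) ≃ {l : List ℕ // l ~ List.range n} := by
  have hlen : ∀ l : List ℕ, l ~ List.range n → l.length = n := fun l hl => by
    simpa using hl.length_eq
  have hmem : ∀ (l : List ℕ) (hl : l ~ List.range n) (i : Fin n),
      l[(i : ℕ)]'(by rw [hlen l hl]; exact i.isLt) < n := fun l hl i => by
    have : l[(i : ℕ)]'(by rw [hlen l hl]; exact i.isLt) ∈ l := List.getElem_mem _
    rw [hl.mem_iff, List.mem_range] at this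
    exact this
  refine
    { toFun := fun τ => ⟨pWord τ, pWord_perm τ⟩
      invFun := fun l =>
        Equiv.ofBijective (fun i : Fin n => (⟨l.1[(i : ℕ)]'(by rw [hlen l.1 l.2]; exact i.isLt),
          hmem l.1 l.2 i⟩ : Fin n)) ?_
      left_inv := ?_
      right_inv := ?_ }
  · -- bijective
    obtain ⟨l, hl⟩ := l
    rw [Fintype.bijective_iff_injective_and_card]
    refine ⟨?_, rfl⟩
    intro x y hxy
    simp only [Fin.mk.injEq] at hxy
    have hnd : l.Nodup := hl.nodup_iff.2 nodup_range
    have := (List.Nodup.getElem_inj_iff hnd).1 hxy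
    exact Fin.ext this
  · intro τ
    ext i
    simp only [Equiv.ofBijective_apply]
    simp [pWord]
  · rintro ⟨l, hl⟩
    ext1
    simp only [pWord]
    apply List.ext_getElem
    · rw [List.length_ofFn, hlen l hl]
    · intro i h1 h2
      simp only [List.getElem_ofFn, Equiv.ofBijective_apply]



lemma erase_insertIdx_self : ∀ (i : ℕ) (x : ℕ) (l : List ℕ), i ≤ l.length → x ∉ l →
    (List.insertIdx l i x).erase x = l
  | 0, x, l, _, _ => by simp [List.insertIdx_zero, List.erase_cons_head]
  | (i+1), x, [], hi, _ => by simp at hi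
  | (i+1), x, (b :: t), hi, hx => by
      rw [List.insertIdx_succ_cons, List.erase_cons_tail
        (by simp only [beq_iff_eq]; rintro rfl; exact hx (List.mem_cons_self)),
        erase_insertIdx_self i x t (by simpa using hi)
          (fun h => hx (List.mem_cons_of_mem b h))]

lemma indexOf_insertIdx_self : ∀ (i : ℕ) (x : ℕ) (l : List ℕ), i ≤ l.length → x ∉ l →
    List.idxOf x (List.insertIdx l i x) = i
  | 0, x, l, _, _ => by simp [List.insertIdx_zero, List.idxOf_cons_self]
  | (i+1), x, [], hi, _ => by simp at hi
  | (i+1), x, (b :: t), hi, hx => by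
      rw [List.insertIdx_succ_cons, List.idxOf_cons_ne _
        (fun h => hx (by rw [← h]; exact List.mem_cons_self)),
        indexOf_insertIdx_self i x t (by simpa using hi)
          (fun h => hx (List.mem_cons_of_mem b h))]

lemma insertIdx_indexOf_erase : ∀ (l : List ℕ) (x : ℕ), x ∈ l →
    List.insertIdx (l.erase x) (List.idxOf x l) x = l
  | [], x, hx => by simp at hx
  | (b :: t), x, hx => by
      by_cases hbx : b = x
      · subst hbx
        rw [List.idxOf_cons_self, List.erase_cons_head, List.insertIdx_zero]
      · rw [List.idxOf_cons_ne _ hbx, List.erase_cons_tail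
          (by simp only [beq_iff_eq]; exact hbx)]
        rw [Nat.succ_eq_add_one, List.insertIdx_succ_cons,
          insertIdx_indexOf_erase t x ((List.mem_cons.1 hx).resolve_left
            (fun h => hbx h.symm))]

lemma range_succ_erase (m : ℕ) : (List.range (m+1)).erase m = List.range m := by
  rw [List.range_succ, List.erase_append_right _ (by simp), List.erase_cons_head,
    List.append_nil]

noncomputable def eraseInsertEquiv (m : ℕ) :
    {l : List ℕ // l ~ List.range (m+1) ∧ Av132 (l.erase m)} ≃
      Fin (m+1) × {l : List ℕ // l ~ List.range m ∧ Av132 l} where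
  toFun l := ⟨⟨List.idxOf m l.1, by
      have h1 : List.idxOf m l.1 < l.1.length :=
        List.idxOf_lt_length_iff.2 (l.2.1.mem_iff.2 (by simp))
      have h2 : l.1.length = m + 1 := by simpa using l.2.1.length_eq
      omega⟩,
    ⟨l.1.erase m, (l.2.1.erase m).trans (by rw [range_succ_erase]), l.2.2⟩⟩
  invFun p := ⟨List.insertIdx p.2.1 p.1 m, by
      have hlen : p.2.1.length = m := by simpa using p.2.2.1.length_eq
      have hnm : m ∉ p.2.1 := fun h => by
        have := p.2.2.1.mem_iff.1 h
        simp at this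
      have hle : (p.1 : ℕ) ≤ p.2.1.length := by rw [hlen]; exact Nat.lt_succ_iff.1 p.1.isLt
      constructor
      · refine (List.perm_insertIdx m _ hle).trans ?_
        refine (List.Perm.cons m p.2.2.1).trans ?_
        rw [List.range_succ]
        exact (List.perm_append_singleton m _).symm
      · rw [erase_insertIdx_self _ _ _ hle hnm]
        exact p.2.2.2⟩
  left_inv l := by
    ext1
    exact insertIdx_indexOf_erase l.1 m (l.2.1.mem_iff.2 (by simp))
  right_inv p := by
    have hlen : p.2.1.length = m := by simpa using p.2.2.1.length_eq
    have hnm : m ∉ p.2.1 := fun h => by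
      have := p.2.2.1.mem_iff.1 h
      simp at this
    have hle : (p.1 : ℕ) ≤ p.2.1.length := by rw [hlen]; exact Nat.lt_succ_iff.1 p.1.isLt
    ext : 1
    · ext1
      exact indexOf_insertIdx_self _ _ _ hle hnm
    · ext1
      exact erase_insertIdx_self _ _ _ hle hnm


noncomputable def treeListEquiv (m : ℕ) :
    {t : BinaryTree Unit // t.numNodes = m} ≃ {l : List ℕ // l ~ List.range m ∧ Av132 l} := by
  refine Equiv.ofBijective
    (fun t => ⟨tL t.1, by have := tL_perm t.1; rwa [t.2] at this, tL_av t.1⟩) ⟨?_, ?_⟩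
  · intro t₁ t₂ h
    exact Subtype.ext (tL_inj _ _ (congrArg Subtype.val h))
  · intro l
    obtain ⟨t, ht⟩ := tL_surj m l.1 l.2.1 l.2.2
    refine ⟨⟨t, ?_⟩, Subtype.ext ht⟩
    rw [← tL_length, ht]
    simpa using l.2.1.length_eq

lemma countAv (m : ℕ) : Nat.card {l : List ℕ // l ~ List.range m ∧ Av132 l} = catalan m := by
  rw [← Nat.card_congr (treeListEquiv m)]
  rw [Nat.card_congr (Equiv.subtypeEquivRight
    (fun t : BinaryTree Unit => BinaryTree.mem_treesOfNumNodesEq.symm))]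
  rw [Nat.card_eq_fintype_card, Fintype.card_coe, BinaryTree.treesOfNumNodesEq_card_eq_catalan]

theorem stmt15 (n : ℕ) (hn : 1 ≤ n) :
    Nat.card {τ : Equiv.Perm (Fin n) //
      AvoidsPat τ ![1,3,2,4] ∧ AvoidsPat τ ![1,3,4,2] ∧
      AvoidsPat τ ![1,4,3,2] ∧ AvoidsPat τ ![4,1,3,2]} =
    Nat.choose (2 * (n - 1)) (n - 1) := by
  obtain ⟨m, rfl⟩ : ∃ m, n = m + 1 := ⟨n - 1, by omega⟩
  have e0 : {τ : Equiv.Perm (Fin (m+1)) //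
      AvoidsPat τ ![1,3,2,4] ∧ AvoidsPat τ ![1,3,4,2] ∧
      AvoidsPat τ ![1,4,3,2] ∧ AvoidsPat τ ![4,1,3,2]} ≃
      {x : {l : List ℕ // l ~ List.range (m+1)} // Av132 (x.1.erase m)} := by
    refine Equiv.subtypeEquiv (permWordEquiv (m+1)) (fun τ => ?_)
    have hco : ((permWordEquiv (m+1)) τ).1 = pWord τ := rfl
    rw [hco]
    unfold AvoidsPat
    rw [← not_or, ← not_or, ← not_or, containsFour_iff τ, not_not]
  have e1 := e0.trans (Equiv.subtypeSubtypeEquivSubtypeInter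
    (fun l : List ℕ => l ~ List.range (m+1)) (fun l => Av132 (l.erase m)))
  rw [Nat.card_congr e1, Nat.card_congr (eraseInsertEquiv m), Nat.card_prod,
    Nat.card_eq_fintype_card, Fintype.card_fin, countAv]
  rw [succ_mul_catalan_eq_centralBinom, Nat.centralBinom]
  simp
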